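/- Let G be a connected P5-free chordal bipartite graph with bipartition (A,B) where |A| = |B| + 1, maximum biclique (A1,B1), and NNO orderings A2 = (u_1,...,u_p), B2 = (v_1,...,v_q). If G has a Hamiltonian path, then deg(u_g) ≥ g for all 1 ≤ g ≤ p and deg(v_h) > h for all 1 ≤ h ≤ q. -/

import Mathlib

open SimpleGraph Finset

variable {V : Type*}

/-- `(A, B)` is a bipartition of the graph `G`. -/
def IsBipartitionOf (G : SimpleGraph V) (A B : Finset V) : Prop :=
  Disjoint A B ∧ (∀ v : V, v ∈ A ∨ v ∈ B) ∧
    ∀ ⦃x y : V⦄, G.Adj x y → (x ∈ A ∧ y ∈ B) ∨ (x ∈ B ∧ y ∈ A)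

/-- `G` has no induced path on `n` vertices. -/
def PFree (n : ℕ) (G : SimpleGraph V) : Prop :=
  ∀ f : Fin n → V, Function.Injective f →
    ¬ (∀ i j : Fin n, G.Adj (f i) (f j) ↔ ((i : ℕ) + 1 = (j : ℕ) ∨ (j : ℕ) + 1 = (i : ℕ)))

/-- Every cycle of length at least 6 has a chord. -/
def ChordalBipartite (G : SimpleGraph V) : Prop :=
  ∀ (v : V) (c : G.Walk v v), c.IsCycle → 6 ≤ c.length →
    ∃ x y : V, x ∈ c.support ∧ y ∈ c.support ∧ G.Adj x y ∧ s(x, y) ∉ c.edges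

/-- `(A1, B1)` is a maximal biclique of `G` within the bipartition `(A, B)`:
it is a complete bipartite subgraph and no vertex can be added to either side. -/
def IsMaximalBiclique (G : SimpleGraph V) (A B A1 B1 : Finset V) : Prop :=
  A1 ⊆ A ∧ B1 ⊆ B ∧ (∀ x ∈ A1, ∀ y ∈ B1, G.Adj x y) ∧
    (∀ x ∈ A, (∀ y ∈ B1, G.Adj x y) → x ∈ A1) ∧
    (∀ y ∈ B, (∀ x ∈ A1, G.Adj x y) → y ∈ B1)

section Aux

variable {G : SimpleGraph V} {A B : Finset V} {x x' y y' z : V}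

lemma IsBipartitionOf.symm (h : IsBipartitionOf G A B) : IsBipartitionOf G B A :=
  ⟨h.1.symm, fun v => (h.2.1 v).symm, fun _ _ hxy => (h.2.2 hxy).symm⟩

lemma IsBipartitionOf.notMemB (h : IsBipartitionOf G A B) (hx : x ∈ A) : x ∉ B :=
  fun hB => (Finset.disjoint_left.mp h.1) hx hB

lemma IsBipartitionOf.adj_mem (h : IsBipartitionOf G A B) (hx : x ∈ A) (hxy : G.Adj x y) :
    y ∈ B := by
  rcases h.2.2 hxy with ⟨_, hy⟩ | ⟨hxB, _⟩
  · exact hy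
  · exact absurd hxB (h.notMemB hx)

lemma IsBipartitionOf.not_adj (h : IsBipartitionOf G A B) (hx : x ∈ A) (hy : y ∈ A) :
    ¬ G.Adj x y := fun hxy => h.notMemB hy (h.adj_mem hx hxy)

lemma IsBipartitionOf.ne (h : IsBipartitionOf G A B) (hx : x ∈ A) (hy : y ∈ B) : x ≠ y :=
  fun e => h.notMemB hx (e ▸ hy)

/-- If `x, x' ∈ A` have a common neighbor, their neighborhoods are comparable. -/
lemma comparable_of_common (hp5 : PFree 5 G) (hbip : IsBipartitionOf G A B)
    (hx : x ∈ A) (hx' : x' ∈ A) (h1 : G.Adj x z) (h2 : G.Adj x' z) :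
    (∀ y, G.Adj x y → G.Adj x' y) ∨ (∀ y, G.Adj x' y → G.Adj x y) := by
  by_contra hcon
  push_neg at hcon
  obtain ⟨⟨y, hxy, hny⟩, ⟨y', hx'y', hny'⟩⟩ := hcon
  have hzB : z ∈ B := hbip.adj_mem hx h1
  have hyB : y ∈ B := hbip.adj_mem hx hxy
  have hy'B : y' ∈ B := hbip.adj_mem hx' hx'y'
  have hxx' : x ≠ x' := by rintro rfl; exact hny hxy
  have hyz : y ≠ z := by rintro rfl; exact hny h2
  have hy'z : y' ≠ z := by rintro rfl; exact hny' h1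
  have hyy' : y ≠ y' := by rintro rfl; exact hny hx'y'
  have noBB : ∀ a b : V, a ∈ B → b ∈ B → ¬ G.Adj a b := fun a b ha hb =>
    hbip.symm.not_adj ha hb
  have noAA : ∀ a b : V, a ∈ A → b ∈ A → ¬ G.Adj a b := fun a b ha hb =>
    hbip.not_adj ha hb
  apply hp5 ![y, x, z, x', y']
  · intro i j hij
    fin_cases i <;> fin_cases j <;>
      first
        | rfl
        | (exfalso; simp only [Matrix.cons_val_zero, Matrix.cons_val_one, Matrix.head_cons,
            Matrix.cons_val_two, Matrix.tail_cons, Matrix.cons_val_three, Matrix.cons_val_four] at hij) <;>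
          first
            | exact hyz hij | exact hyz hij.symm
            | exact hyy' hij | exact hyy' hij.symm
            | exact hy'z hij | exact hy'z hij.symm
            | exact hxx' hij | exact hxx' hij.symm
            | exact hbip.ne hx hyB hij.symm | exact hbip.ne hx hyB hij
            | exact hbip.ne hx hzB hij.symm | exact hbip.ne hx hzB hij
            | exact hbip.ne hx hy'B hij.symm | exact hbip.ne hx hy'B hij
            | exact hbip.ne hx' hyB hij.symm | exact hbip.ne hx' hyB hij
            | exact hbip.ne hx' hzB hij.symm | exact hbip.ne hx' hzB hij
            | exact hbip.ne hx' hy'B hij.symm | exact hbip.ne hx' hy'B hij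
  · intro i j
    fin_cases i <;> fin_cases j <;>
      first
        | (refine iff_of_true ?_ (by decide)
           first
             | exact hxy | exact hxy.symm | exact h1 | exact h1.symm
             | exact h2 | exact h2.symm | exact hx'y' | exact hx'y'.symm)
        | (refine iff_of_false ?_ (by decide)
           first
             | exact G.irrefl
             | exact noBB _ _ hyB hzB | exact noBB _ _ hzB hyB
             | exact noBB _ _ hyB hy'B | exact noBB _ _ hy'B hyB
             | exact noBB _ _ hzB hy'B | exact noBB _ _ hy'B hzB
             | exact noAA _ _ hx hx' | exact noAA _ _ hx' hx
             | exact hny | exact fun hadj => hny hadj.symm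
             | exact hny' | exact fun hadj => hny' hadj.symm)

/-- In a connected `P5`-free bipartite graph, neighborhoods of vertices on the
same side are totally ordered by inclusion. -/
lemma comparable_of_conn (hconn : G.Connected) (hp5 : PFree 5 G) (hbip : IsBipartitionOf G A B)
    (hx : x ∈ A) (hx' : x' ∈ A) :
    (∀ y, G.Adj x y → G.Adj x' y) ∨ (∀ y, G.Adj x' y → G.Adj x y) := by
  obtain ⟨w⟩ := hconn.preconnected x x'
  suffices H : ∀ n : ℕ, ∀ x x' : V, x ∈ A → x' ∈ A → ∀ w : G.Walk x x', w.length = n →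
      (∀ y, G.Adj x y → G.Adj x' y) ∨ (∀ y, G.Adj x' y → G.Adj x y) from
    H w.length x x' hx hx' w rfl
  intro n
  induction n using Nat.strong_induction_on with
  | _ n ih =>
    intro x x' hx hx' w hlen
    cases w with
    | nil => exact Or.inl fun y h => h
    | cons h1 rest =>
      rename_i bb
      have hbB : bb ∈ B := hbip.adj_mem hx h1
      cases rest with
      | nil => exact absurd hbB (hbip.notMemB hx')
      | cons h2 rest2 =>
        rename_i cc
        have hcA : cc ∈ A := hbip.symm.adj_mem hbB h2
        simp only [SimpleGraph.Walk.length_cons] at hlen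
        have hIH := ih rest2.length (by omega) cc x' hcA hx' rest2 rfl
        rcases hIH with hIH | hIH
        · -- N(cc) ⊆ N(x'), so bb is a common neighbor of x and x'
          exact comparable_of_common hp5 hbip hx hx' h1 (hIH bb h2.symm)
        · -- N(x') ⊆ N(cc); x and cc have common neighbor bb
          rcases comparable_of_common hp5 hbip hx hcA h1 h2.symm with hc | hc
          · -- N(x) ⊆ N(cc) and N(x') ⊆ N(cc)
            by_contra hcon
            push_neg at hcon
            obtain ⟨⟨y, hxy, hny⟩, ⟨y', hx'y', hny'⟩⟩ := hcon
            have hyB : y ∈ B := hbip.adj_mem hx hxy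
            have hy'B : y' ∈ B := hbip.adj_mem hx' hx'y'
            have hxx' : x ≠ x' := by rintro rfl; exact hny hxy
            have hxc : x ≠ cc := by
              rintro rfl; exact hny' (hIH y' hx'y')
            have hx'c : x' ≠ cc := by
              rintro rfl; exact hny (hc y hxy)
            have hyy' : y ≠ y' := by rintro rfl; exact hny hx'y'
            have hcy : G.Adj cc y := hc y hxy
            have hcy' : G.Adj cc y' := hIH y' hx'y'
            have noBB : ∀ a b : V, a ∈ B → b ∈ B → ¬ G.Adj a b := fun a b ha hb =>
              hbip.symm.not_adj ha hb
            have noAA : ∀ a b : V, a ∈ A → b ∈ A → ¬ G.Adj a b := fun a b ha hb =>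
              hbip.not_adj ha hb
            apply hp5 ![x, y, cc, y', x']
            · intro i j hij
              fin_cases i <;> fin_cases j <;>
                first
                  | rfl
                  | (exfalso
                     first
                       | exact hyy' hij | exact hyy' hij.symm
                       | exact hxx' hij | exact hxx' hij.symm
                       | exact hxc hij | exact hxc hij.symm
                       | exact hx'c hij | exact hx'c hij.symm
                       | exact hbip.ne hx hyB hij | exact hbip.ne hx hyB hij.symm
                       | exact hbip.ne hx hy'B hij | exact hbip.ne hx hy'B hij.symm
                       | exact hbip.ne hcA hyB hij | exact hbip.ne hcA hyB hij.symm
                       | exact hbip.ne hcA hy'B hij | exact hbip.ne hcA hy'B hij.symm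
                       | exact hbip.ne hx' hyB hij | exact hbip.ne hx' hyB hij.symm
                       | exact hbip.ne hx' hy'B hij | exact hbip.ne hx' hy'B hij.symm)
            · intro i j
              fin_cases i <;> fin_cases j <;>
                first
                  | (refine iff_of_true ?_ (by decide)
                     first
                       | exact hxy | exact hxy.symm
                       | exact hcy | exact hcy.symm
                       | exact hcy' | exact hcy'.symm
                       | exact hx'y' | exact hx'y'.symm)
                  | (refine iff_of_false ?_ (by decide)
                     first
                       | exact G.irrefl
                       | exact noBB _ _ hyB hy'B | exact noBB _ _ hy'B hyB
                       | exact noAA _ _ hx hcA | exact noAA _ _ hcA hx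
                       | exact noAA _ _ hx hx' | exact noAA _ _ hx' hx
                       | exact noAA _ _ hcA hx' | exact noAA _ _ hx' hcA
                       | exact hny | exact fun hadj => hny hadj.symm
                       | exact hny' | exact fun hadj => hny' hadj.symm)
          · -- N(cc) ⊆ N(x), so N(x') ⊆ N(cc) ⊆ N(x)
            exact Or.inr fun y hy => hc y (hIH y hy)

lemma ham_count [Fintype V] [DecidableEq V] {a b : V}
    (w : G.Walk a b) (hw : w.IsHamiltonian) (U S : Finset V)
    (hUS : ∀ u ∈ U, ∀ y, G.Adj u y → y ∈ S) (z : V) (hzU : z ∉ U) (hzS : z ∉ S) :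
    U.card ≤ S.card := by
  classical
  set l := w.support with hl
  have hnd : l.Nodup := hw.isPath.support_nodup
  have hmem : ∀ x : V, x ∈ l := fun x => hw.mem_support x
  have hidx : ∀ x : V, l.idxOf x < l.length := fun x =>
    List.idxOf_lt_length_iff.mpr (hmem x)
  have hget : ∀ x : V, ∀ h, l.get ⟨l.idxOf x, h⟩ = x := fun x h => List.idxOf_get h
  have hidxget : ∀ (i : ℕ) (h : i < l.length), l.idxOf (l.get ⟨i, h⟩) = i := by
    intro i h
    rw [List.get_eq_getElem]
    exact List.Nodup.idxOf_getElem hnd i h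
  have hchain : ∀ (i : ℕ) (h : i < l.length - 1),
      G.Adj (l.get ⟨i, by omega⟩) (l.get ⟨i + 1, by omega⟩) :=
    fun i h => (List.isChain_iff_getElem (l := l)).mp w.isChain_adj_support i (by omega)
  set f : V → V := fun x =>
    if l.idxOf x < l.idxOf z then l.getD (l.idxOf x + 1) x
    else l.getD (l.idxOf x - 1) x with hf
  have main : ∀ u ∈ U, f u ∈ S ∧
      ((l.idxOf u < l.idxOf z ∧ l.idxOf (f u) = l.idxOf u + 1) ∨
       (l.idxOf z < l.idxOf u ∧ l.idxOf (f u) = l.idxOf u - 1 ∧ 1 ≤ l.idxOf u)) := by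
    intro u hu
    have huz : u ≠ z := fun e => hzU (e ▸ hu)
    have hne : l.idxOf u ≠ l.idxOf z := fun e =>
      huz ((List.idxOf_inj (hmem u)).mp e)
    by_cases hlt : l.idxOf u < l.idxOf z
    · have h1 : l.idxOf u + 1 < l.length := by have := hidx z; omega
      have hfu : f u = l.get ⟨l.idxOf u + 1, h1⟩ := by
        rw [hf]; simp only [if_pos hlt]
        exact List.getD_eq_getElem l u h1
      have hadj : G.Adj u (f u) := by
        rw [hfu]
        have := hchain (l.idxOf u) (by omega)
        rwa [hget u] at this
      refine ⟨hUS u hu _ hadj, Or.inl ⟨hlt, ?_⟩⟩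
      rw [hfu, hidxget]
    · have hgt : l.idxOf z < l.idxOf u := by omega
      have h0 : 1 ≤ l.idxOf u := by omega
      have h1 : l.idxOf u - 1 < l.length := by have := hidx u; omega
      have hfu : f u = l.get ⟨l.idxOf u - 1, h1⟩ := by
        rw [hf]; simp only [if_neg hlt]
        exact List.getD_eq_getElem l u h1
      have hadj : G.Adj u (f u) := by
        rw [hfu]
        have h2 := hchain (l.idxOf u - 1) (by have := hidx u; omega)
        have h3 : l.idxOf u - 1 + 1 = l.idxOf u := by omega
        simp only [h3] at h2
        rw [hget u] at h2
        exact h2.symm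
      refine ⟨hUS u hu _ hadj, Or.inr ⟨hgt, ?_, h0⟩⟩
      rw [hfu, hidxget]
  apply Finset.card_le_card_of_injOn f (fun u hu => (main u hu).1)
  intro u1 h1 u2 h2 heq
  obtain ⟨hS1, hc1⟩ := main u1 h1
  obtain ⟨hS2, hc2⟩ := main u2 h2
  have hii : l.idxOf (f u1) = l.idxOf (f u2) := by rw [heq]
  have hzidx : ∀ uu ∈ U, l.idxOf (f uu) ≠ l.idxOf z := by
    intro uu huu e
    have : f uu = z := (List.idxOf_inj (hmem _)).mp e
    exact hzS (this ▸ (main uu huu).1)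
  have hz1 := hzidx u1 h1
  have hz2 := hzidx u2 h2
  have : l.idxOf u1 = l.idxOf u2 := by
    rcases hc1 with ⟨hl1, he1⟩ | ⟨hg1, he1, hp1⟩ <;>
      rcases hc2 with ⟨hl2, he2⟩ | ⟨hg2, he2, hp2⟩ <;> omega
  exact (List.idxOf_inj (hmem u1)).mp this

lemma ham_count' [Fintype V] [DecidableEq V] {a b : V}
    (w : G.Walk a b) (hw : w.IsHamiltonian) (W T : Finset V)
    (hWT : ∀ x ∈ W, ∀ y, G.Adj x y → y ∈ T) (hne : W.Nonempty)
    (hint : ∀ x ∈ W, x ≠ a ∧ x ≠ b) : W.card + 1 ≤ T.card := by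
  classical
  set l := w.support with hl
  have hlnil : l ≠ [] := w.support_ne_nil
  have hnd : l.Nodup := hw.isPath.support_nodup
  have hmem : ∀ x : V, x ∈ l := fun x => hw.mem_support x
  have hidx : ∀ x : V, l.idxOf x < l.length := fun x =>
    List.idxOf_lt_length_iff.mpr (hmem x)
  have hget : ∀ x : V, ∀ h, l.get ⟨l.idxOf x, h⟩ = x := fun x h => List.idxOf_get h
  have hidxget : ∀ (i : ℕ) (h : i < l.length), l.idxOf (l.get ⟨i, h⟩) = i := by
    intro i h
    rw [List.get_eq_getElem]
    exact List.Nodup.idxOf_getElem hnd i h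
  have hchain : ∀ (i : ℕ) (h : i < l.length - 1),
      G.Adj (l.get ⟨i, by omega⟩) (l.get ⟨i + 1, by omega⟩) :=
    fun i h => (List.isChain_iff_getElem (l := l)).mp w.isChain_adj_support i (by omega)
  have hha : l.get ⟨0, List.length_pos_iff.mpr hlnil⟩ = a := by
    rw [List.get_eq_getElem, List.getElem_zero]
    exact w.head_support
  have hhb : l.get ⟨l.length - 1, by have := List.length_pos_iff.mpr hlnil; omega⟩ = b := by
    rw [List.get_length_sub_one]
    exact w.getLast_support
  -- every element of W is an interior vertex of the path
  have hint' : ∀ x ∈ W, 1 ≤ l.idxOf x ∧ l.idxOf x < l.length - 1 := by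
    intro x hx
    obtain ⟨hxa, hxb⟩ := hint x hx
    constructor
    · rcases Nat.eq_zero_or_pos (l.idxOf x) with h0 | h1
      · exfalso
        apply hxa
        have e1 : x = l.get ⟨l.idxOf x, hidx x⟩ := (hget x _).symm
        have e2 : (⟨l.idxOf x, hidx x⟩ : Fin l.length) =
            ⟨0, List.length_pos_iff.mpr hlnil⟩ := Fin.ext h0
        rw [e1, e2, hha]
      · exact h1
    · have hlt := hidx x
      rcases lt_or_eq_of_le (Nat.le_sub_one_of_lt hlt) with h | h
      · exact h
      · exfalso
        apply hxb
        have e1 : x = l.get ⟨l.idxOf x, hidx x⟩ := (hget x _).symm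
        have e2 : (⟨l.idxOf x, hidx x⟩ : Fin l.length) =
            ⟨l.length - 1, by have := List.length_pos_iff.mpr hlnil; omega⟩ := Fin.ext h
        rw [e1, e2, hhb]
  set f : V → V := fun x => l.getD (l.idxOf x - 1) x with hf
  have main : ∀ x ∈ W, f x ∈ T ∧ l.idxOf (f x) = l.idxOf x - 1 := by
    intro x hx
    obtain ⟨h1, h2⟩ := hint' x hx
    have hvalid : l.idxOf x - 1 < l.length := by have := hidx x; omega
    have hfx : f x = l.get ⟨l.idxOf x - 1, hvalid⟩ := by
      rw [hf]; exact List.getD_eq_getElem l x hvalid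
    have hadj : G.Adj x (f x) := by
      rw [hfx]
      have hc := hchain (l.idxOf x - 1) (by omega)
      have h3 : l.idxOf x - 1 + 1 = l.idxOf x := by omega
      simp only [h3] at hc
      rw [hget x] at hc
      exact hc.symm
    exact ⟨hWT x hx _ hadj, by rw [hfx, hidxget]⟩
  -- the maximal element of W
  obtain ⟨m, hmW, hmax⟩ := Finset.exists_max_image W (fun x => l.idxOf x) hne
  have hm2 : l.idxOf m + 1 < l.length := by have := (hint' m hmW).2; omega
  set t : V := l.get ⟨l.idxOf m + 1, hm2⟩ with ht
  have htT : t ∈ T := by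
    apply hWT m hmW
    have hc := hchain (l.idxOf m) (by omega)
    rwa [hget m] at hc
  have htidx : l.idxOf t = l.idxOf m + 1 := by rw [ht, hidxget]
  have htni : t ∉ W.image f := by
    intro hmem'
    obtain ⟨x, hxW, hxf⟩ := Finset.mem_image.mp hmem'
    have := (main x hxW).2
    rw [hxf, htidx] at this
    have h1 := (hint' x hxW).1
    have hle := hmax x hxW
    omega
  have hsub : insert t (W.image f) ⊆ T := by
    intro y hy
    rcases Finset.mem_insert.mp hy with rfl | hy
    · exact htT
    · obtain ⟨x, hxW, rfl⟩ := Finset.mem_image.mp hy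
      exact (main x hxW).1
  have hinj : Set.InjOn f W := by
    intro x1 h1 x2 h2 heq
    have e1 := (main x1 h1).2
    have e2 := (main x2 h2).2
    have i1 := (hint' x1 h1).1
    have i2 := (hint' x2 h2).1
    have : l.idxOf x1 = l.idxOf x2 := by rw [heq] at e1; omega
    exact (List.idxOf_inj (hmem x1)).mp this
  calc W.card + 1 = (W.image f).card + 1 := by rw [Finset.card_image_of_injOn hinj]
    _ = (insert t (W.image f)).card := (Finset.card_insert_of_notMem htni).symm
    _ ≤ T.card := Finset.card_le_card hsub

lemma count_odd_range (n : ℕ) : ((Finset.range n).filter (fun i => Odd i)).card = n / 2 := by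
  induction n with
  | zero => simp
  | succ n ih =>
    rw [Finset.range_add_one, Finset.filter_insert]
    by_cases h : Odd n
    · rw [if_pos h, Finset.card_insert_of_notMem (by simp), ih]
      have := Nat.odd_iff.mp h
      omega
    · rw [if_neg h, ih]
      have := Nat.even_iff.mp (Nat.not_odd_iff_even.mp h)
      omega

lemma ham_ends_in_A [Fintype V] [DecidableEq V] {a b : V}
    (w : G.Walk a b) (hw : w.IsHamiltonian)
    (hbip : IsBipartitionOf G A B) (hcard : A.card = B.card + 1) : a ∈ A ∧ b ∈ A := by
  classical
  set l := w.support with hl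
  have hlnil : l ≠ [] := w.support_ne_nil
  have hnd : l.Nodup := hw.isPath.support_nodup
  have hmem : ∀ x : V, x ∈ l := fun x => hw.mem_support x
  have hidx : ∀ x : V, l.idxOf x < l.length := fun x =>
    List.idxOf_lt_length_iff.mpr (hmem x)
  have hget : ∀ x : V, ∀ h, l.get ⟨l.idxOf x, h⟩ = x := fun x h => List.idxOf_get h
  have hchain : ∀ (i : ℕ) (h : i < l.length - 1),
      G.Adj (l.get ⟨i, by omega⟩) (l.get ⟨i + 1, by omega⟩) :=
    fun i h => (List.isChain_iff_getElem (l := l)).mp w.isChain_adj_support i (by omega)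
  have hha : l.get ⟨0, List.length_pos_iff.mpr hlnil⟩ = a := by
    rw [List.get_eq_getElem, List.getElem_zero]
    exact w.head_support
  have hhb : l.get ⟨l.length - 1, by have := List.length_pos_iff.mpr hlnil; omega⟩ = b := by
    rw [List.get_length_sub_one]
    exact w.getLast_support
  -- cardinalities
  have hABuniv : A ∪ B = Finset.univ := by
    apply Finset.eq_univ_iff_forall.mpr
    intro x
    rcases hbip.2.1 x with h | h
    · exact Finset.mem_union_left _ h
    · exact Finset.mem_union_right _ h
  have hcardV : Fintype.card V = A.card + B.card := by
    rw [← Finset.card_univ, ← hABuniv, Finset.card_union_of_disjoint hbip.1]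
  have hlen : l.length = Fintype.card V := by
    have h1 : l.length = w.length + 1 := w.length_support
    have h2 : w.length = Fintype.card V - 1 := hw.length_eq
    have h3 : 1 ≤ Fintype.card V := Fintype.card_pos_iff.mpr ⟨a⟩
    omega
  have hn : l.length = 2 * B.card + 1 := by omega
  -- side flip along edges
  have hflip : ∀ x y : V, G.Adj x y → (x ∈ A ↔ ¬(y ∈ A)) := by
    intro x y hxy
    rcases hbip.2.2 hxy with ⟨hxA, hyB⟩ | ⟨hxB, hyA⟩
    · exact iff_of_true hxA (hbip.symm.notMemB hyB)
    · exact iff_of_false (hbip.symm.notMemB hxB) (fun h => h hyA)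
  -- parity of positions
  have hpar : ∀ (i : ℕ) (h : i < l.length), (l.get ⟨i, h⟩ ∈ A ↔ (Even i ↔ a ∈ A)) := by
    intro i
    induction i with
    | zero =>
      intro h
      rw [hha]
      simp
    | succ i ih =>
      intro h
      have hi : i < l.length := by omega
      have hstep : l.get ⟨i, hi⟩ ∈ A ↔ ¬ (l.get ⟨i + 1, h⟩ ∈ A) :=
        hflip _ _ (hchain i (by omega))
      have hih := ih hi
      rw [Nat.even_add_one]
      tauto
  -- a ∈ A by counting
  have haA : a ∈ A := by
    by_contra haB
    have hAfil : A.card = (Finset.univ.filter (fun i : Fin l.length => l.get i ∈ A)).card := by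
      apply (Finset.card_bij (fun (i : Fin l.length) _ => l.get i) ?_ ?_ ?_).symm
      · intro i hi
        exact (Finset.mem_filter.mp hi).2
      · intro i₁ h₁ i₂ h₂ he
        exact List.nodup_iff_injective_get.mp hnd he
      · intro x hx
        refine ⟨⟨l.idxOf x, hidx x⟩, Finset.mem_filter.mpr ⟨Finset.mem_univ _, ?_⟩, ?_⟩
        · rw [hget x]; exact hx
        · exact hget x (hidx x)
    have hodd : (Finset.univ.filter (fun i : Fin l.length => l.get i ∈ A)) =
        (Finset.univ.filter (fun i : Fin l.length => Odd i.val)) := by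
      apply Finset.filter_congr
      intro i _
      have := hpar i.val (by exact i.isLt)
      simp only [Fin.eta] at this
      rw [this]
      simp [haB, Nat.not_even_iff_odd]
    have hcnt : (Finset.univ.filter (fun i : Fin l.length => Odd i.val)).card = l.length / 2 := by
      rw [← count_odd_range]
      apply Finset.card_bij (fun (i : Fin l.length) _ => i.val)
      · intro i hi
        simp only [Finset.mem_filter, Finset.mem_range]
        exact ⟨i.isLt, (Finset.mem_filter.mp hi).2⟩
      · intro i₁ h₁ i₂ h₂ he
        exact Fin.ext he
      · intro j hj
        simp only [Finset.mem_filter, Finset.mem_range] at hj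
        exact ⟨⟨j, hj.1⟩, Finset.mem_filter.mpr ⟨Finset.mem_univ _, hj.2⟩, rfl⟩
    rw [hAfil, hodd, hcnt] at hcard
    omega
  refine ⟨haA, ?_⟩
  have := hpar (l.length - 1) (by have := List.length_pos_iff.mpr hlnil; omega)
  rw [hhb] at this
  rw [this]
  have : Even (l.length - 1) := by
    rw [hn]
    simp [Nat.even_iff]
  tauto

lemma nested_of_deg_le [Fintype V] [DecidableEq V] [DecidableRel G.Adj] {x x' : V}
    (hcomp : (∀ y, G.Adj x y → G.Adj x' y) ∨ (∀ y, G.Adj x' y → G.Adj x y))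
    (hdeg : G.degree x ≤ G.degree x') : ∀ y, G.Adj x y → G.Adj x' y := by
  rcases hcomp with hc | hc
  · exact hc
  · have hsub : G.neighborFinset x' ⊆ G.neighborFinset x := fun y hy =>
      (G.mem_neighborFinset _ _).mpr (hc y ((G.mem_neighborFinset _ _).mp hy))
    have hle : (G.neighborFinset x).card ≤ (G.neighborFinset x').card := by
      rwa [G.card_neighborFinset_eq_degree, G.card_neighborFinset_eq_degree]
    have heq : G.neighborFinset x' = G.neighborFinset x :=
      Finset.eq_of_subset_of_card_le hsub hle
    intro y hy
    have : y ∈ G.neighborFinset x' := by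
      rw [heq]; exact (G.mem_neighborFinset _ _).mpr hy
    exact (G.mem_neighborFinset _ _).mp this

end Aux

theorem stmt9 [Fintype V] [DecidableEq V] (G : SimpleGraph V) [DecidableRel G.Adj]
    (A B A1 B1 : Finset V) {p q : ℕ} (u : Fin p → V) (v : Fin q → V)
    (hconn : G.Connected) (hbip : IsBipartitionOf G A B)
    (hcb : ChordalBipartite G) (hp5 : PFree 5 G)
    (hmax : IsMaximalBiclique G A B A1 B1)
    -- `u` enumerates `A \ A1` in non-decreasing degree order (NNO)
    (hu : Function.Injective u) (huA : ∀ i, u i ∈ A \ A1)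
    (huAll : ∀ x ∈ A \ A1, ∃ i, u i = x)
    (humono : ∀ i j : Fin p, i ≤ j → G.degree (u i) ≤ G.degree (u j))
    -- `v` enumerates `B \ B1` in non-decreasing degree order (NNO)
    (hv : Function.Injective v) (hvB : ∀ j, v j ∈ B \ B1)
    (hvAll : ∀ y ∈ B \ B1, ∃ j, v j = y)
    (hvmono : ∀ i j : Fin q, i ≤ j → G.degree (v i) ≤ G.degree (v j))
    (hcard : A.card = B.card + 1)
    (hham : ∃ (a b : V) (w : G.Walk a b), w.IsHamiltonian) :
    (∀ g : Fin p, (g : ℕ) + 1 ≤ G.degree (u g)) ∧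
      (∀ h : Fin q, (h : ℕ) + 1 < G.degree (v h)) := by
  classical
  obtain ⟨a, b, w, hw⟩ := hham
  constructor
  · -- vertices of A \ A1
    intro g
    set S := G.neighborFinset (u g) with hS
    set U := (Finset.Iic g).image u with hU
    have hgA : u g ∈ A := (Finset.mem_sdiff.mp (huA g)).1
    have hUcard : U.card = (g : ℕ) + 1 := by
      rw [hU, Finset.card_image_of_injective _ hu, Fin.card_Iic]
    have hUS : ∀ x ∈ U, ∀ y, G.Adj x y → y ∈ S := by
      intro x hx y hxy
      obtain ⟨i, hi, rfl⟩ := Finset.mem_image.mp hx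
      have hig : i ≤ g := Finset.mem_Iic.mp hi
      have hiA : u i ∈ A := (Finset.mem_sdiff.mp (huA i)).1
      have hcomp := comparable_of_conn hconn hp5 hbip hiA hgA
      have hnest := nested_of_deg_le hcomp (humono i g hig)
      exact (G.mem_neighborFinset _ _).mpr (hnest y hxy)
    have hz : ∃ z, z ∉ U ∧ z ∉ S := by
      by_cases hBS : B ⊆ S
      · exfalso
        have hg1 : u g ∈ A1 := hmax.2.2.2.1 (u g) hgA
          (fun y hy => (G.mem_neighborFinset _ _).mp (hBS (hmax.2.1 hy)))
        exact (Finset.mem_sdiff.mp (huA g)).2 hg1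
      · obtain ⟨z, hzB, hzS⟩ := Finset.not_subset.mp hBS
        refine ⟨z, ?_, hzS⟩
        intro hzU
        obtain ⟨i, _, rfl⟩ := Finset.mem_image.mp hzU
        exact hbip.notMemB (Finset.mem_sdiff.mp (huA i)).1 hzB
    obtain ⟨z, hzU, hzS⟩ := hz
    have hcount := ham_count w hw U S hUS z hzU hzS
    rw [hUcard, hS, G.card_neighborFinset_eq_degree] at hcount
    exact hcount
  · -- vertices of B \ B1
    intro h
    set T := G.neighborFinset (v h) with hT
    set W := (Finset.Iic h).image v with hW
    have hhB : v h ∈ B := (Finset.mem_sdiff.mp (hvB h)).1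
    have hWcard : W.card = (h : ℕ) + 1 := by
      rw [hW, Finset.card_image_of_injective _ hv, Fin.card_Iic]
    have hWT : ∀ x ∈ W, ∀ y, G.Adj x y → y ∈ T := by
      intro x hx y hxy
      obtain ⟨i, hi, rfl⟩ := Finset.mem_image.mp hx
      have hih : i ≤ h := Finset.mem_Iic.mp hi
      have hiB : v i ∈ B := (Finset.mem_sdiff.mp (hvB i)).1
      have hcomp := comparable_of_conn hconn hp5 hbip.symm hiB hhB
      have hnest := nested_of_deg_le hcomp (hvmono i h hih)
      exact (G.mem_neighborFinset _ _).mpr (hnest y hxy)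
    have hne : W.Nonempty := ⟨v h, Finset.mem_image_of_mem v (Finset.mem_Iic.mpr le_rfl)⟩
    obtain ⟨haA, hbA⟩ := ham_ends_in_A w hw hbip hcard
    have hint : ∀ x ∈ W, x ≠ a ∧ x ≠ b := by
      intro x hx
      obtain ⟨i, _, rfl⟩ := Finset.mem_image.mp hx
      have hiB : v i ∈ B := (Finset.mem_sdiff.mp (hvB i)).1
      exact ⟨fun e => hbip.notMemB haA (e ▸ hiB), fun e => hbip.notMemB hbA (e ▸ hiB)⟩
    have hcount := ham_count' w hw W T hWT hne hint
    rw [hWcard, hT, G.card_neighborFinset_eq_degree] at hcount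
    omega
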